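/- Let G be a finite simple graph and a, b two nonadjacent vertices of G with S_{a,b} ≠ ∅. Every edge e' of G with φ_G(e') > k_max((a,b)) is unaffected by inserting the edge (a,b): φ_{G+(a,b)}(e') = φ_G(e'). -/

import Mathlib

open SimpleGraph

variable {V : Type*}

/-- `H` is a `k`-truss of `G`: a connected subgraph with at least one edge in which
every edge lies in at least `k - 2` triangles of `H` (i.e. the endpoints of every edge
have at least `k - 2` common neighbors in `H`). -/
def IsTruss (G : SimpleGraph V) (k : ℕ) (H : G.Subgraph) : Prop :=
  H.Connected ∧ H.edgeSet.Nonempty ∧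
    ∀ a b : V, H.Adj a b → k - 2 ≤ {c : V | H.Adj a c ∧ H.Adj b c}.ncard

/-- The truss number `φ_G(e)` of an edge `e`: the largest `k` such that `e` lies in some
`k`-truss of `G`. -/
noncomputable def trussNumber (G : SimpleGraph V) (e : Sym2 V) : ℕ :=
  sSup {k : ℕ | ∃ H : G.Subgraph, IsTruss G k H ∧ e ∈ H.edgeSet}

/-- The support of the edge `(a, b)` in a subgraph `H`: the number of triangles of `H`
containing it, i.e. the number of common neighbors of `a` and `b` in `H`. -/
noncomputable def suppIn {G : SimpleGraph V} (H : G.Subgraph) (a b : V) : ℕ :=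
  {c : V | H.Adj a c ∧ H.Adj b c}.ncard

/-- The support of the edge `(a, b)` in `G`. -/
noncomputable def suppG (G : SimpleGraph V) (a b : V) : ℕ :=
  {c : V | G.Adj a c ∧ G.Adj b c}.ncard

/-- `S_{a,b}`: the common neighbors of `a` and `b` in `G`. -/
def commonNbrs (G : SimpleGraph V) (a b : V) : Set V :=
  {c : V | G.Adj a c ∧ G.Adj b c}

/-- `E_{S_{a,b} ↔ {a,b}}`: the edges of `G` joining a common neighbor of `a` and `b`
to `a` or to `b`. -/
def sideEdges (G : SimpleGraph V) (a b : V) : Set (Sym2 V) :=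
  {e | ∃ c, G.Adj a c ∧ G.Adj b c ∧ (e = s(a, c) ∨ e = s(b, c))}

/-- `k_min((a,b))`: minimum truss number among the edges of `E_{S_{a,b} ↔ {a,b}}`. -/
noncomputable def kmin (G : SimpleGraph V) (a b : V) : ℕ :=
  sInf (trussNumber G '' sideEdges G a b)

/-- `k_max((a,b))`: maximum truss number among the edges of `E_{S_{a,b} ↔ {a,b}}`. -/
noncomputable def kmax (G : SimpleGraph V) (a b : V) : ℕ :=
  sSup (trussNumber G '' sideEdges G a b)

/-- `G + (a,b)`: the graph obtained from `G` by inserting the edge `(a, b)`. -/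
def insertEdge (G : SimpleGraph V) (a b : V) : SimpleGraph V :=
  G ⊔ fromEdgeSet {s(a, b)}

lemma insertEdge_adj {G : SimpleGraph V} {a b x y : V} (hab : a ≠ b) :
    (insertEdge G a b).Adj x y ↔ G.Adj x y ∨ s(x, y) = s(a, b) := by
  constructor
  · rintro (h | h)
    · exact Or.inl h
    · exact Or.inr (by simpa using h.1)
  · rintro (h | h)
    · exact Or.inl h
    · refine Or.inr ⟨by simpa using h, ?_⟩
      rw [Sym2.eq_iff] at h
      rintro rfl
      rcases h with ⟨rfl, rfl⟩ | ⟨rfl, rfl⟩ <;> exact hab rfl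

/-- Transfer a subgraph of `G'` all of whose edges lie in `G` into a subgraph of `G`. -/
def restrictSub {G G' : SimpleGraph V} (H : G'.Subgraph)
    (h : ∀ ⦃x y⦄, H.Adj x y → G.Adj x y) : G.Subgraph where
  verts := H.verts
  Adj := H.Adj
  adj_sub := fun hxy => h hxy
  edge_vert := fun hxy => H.edge_vert hxy
  symm := ⟨fun _ _ hxy => H.adj_symm hxy⟩

lemma restrictSub_isTruss {G G' : SimpleGraph V} (H : G'.Subgraph)
    (h : ∀ ⦃x y⦄, H.Adj x y → G.Adj x y) {k : ℕ} (hk : IsTruss G' k H) :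
    IsTruss G k (restrictSub H h) :=
  ⟨⟨hk.1.coe⟩, hk.2.1, hk.2.2⟩

lemma restrictSub_edgeSet {G G' : SimpleGraph V} (H : G'.Subgraph)
    (h : ∀ ⦃x y⦄, H.Adj x y → G.Adj x y) :
    (restrictSub H h).edgeSet = H.edgeSet := rfl

lemma trussSet_bddAbove [Fintype V] (G : SimpleGraph V) (e : Sym2 V) :
    BddAbove {k : ℕ | ∃ H : G.Subgraph, IsTruss G k H ∧ e ∈ H.edgeSet} := by
  refine ⟨Fintype.card V + 2, ?_⟩
  rintro k ⟨H, ⟨_, ⟨f, hf⟩, hcnt⟩, _⟩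
  induction f with | _ x y =>
  rw [Subgraph.mem_edgeSet] at hf
  have h1 := hcnt x y hf
  have h2 : ({c : V | H.Adj x c ∧ H.Adj y c}).ncard ≤ Fintype.card V := by
    calc _ ≤ (Set.univ : Set V).ncard := Set.ncard_le_ncard (Set.subset_univ _) Set.finite_univ
    _ = Fintype.card V := by rw [Set.ncard_univ, Nat.card_eq_fintype_card]
  omega

lemma le_trussNumber [Fintype V] {G : SimpleGraph V} {k : ℕ} {H : G.Subgraph} {e : Sym2 V}
    (hk : IsTruss G k H) (he : e ∈ H.edgeSet) : k ≤ trussNumber G e :=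
  le_csSup (trussSet_bddAbove G e) ⟨H, hk, he⟩

lemma two_mem_trussSet {G : SimpleGraph V} {e : Sym2 V} (he : e ∈ G.edgeSet) :
    2 ∈ {k : ℕ | ∃ H : G.Subgraph, IsTruss G k H ∧ e ∈ H.edgeSet} := by
  induction e with | _ x y =>
  rw [mem_edgeSet] at he
  refine ⟨G.subgraphOfAdj he, ⟨Subgraph.subgraphOfAdj_connected he, ⟨s(x, y), by simp⟩, ?_⟩, by simp⟩
  intro a b _; simp

lemma exists_truss [Fintype V] {G : SimpleGraph V} {e : Sym2 V} (he : e ∈ G.edgeSet) :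
    ∃ H : G.Subgraph, IsTruss G (trussNumber G e) H ∧ e ∈ H.edgeSet :=
  Nat.sSup_mem ⟨2, two_mem_trussSet he⟩ (trussSet_bddAbove G e)

lemma two_le_trussNumber [Fintype V] {G : SimpleGraph V} {e : Sym2 V} (he : e ∈ G.edgeSet) :
    2 ≤ trussNumber G e :=
  le_csSup (trussSet_bddAbove G e) (two_mem_trussSet he)

def prunedSub (G : SimpleGraph V) (a b : V) (hab : a ≠ b)
    (H : (insertEdge G a b).Subgraph) : G.Subgraph where
  verts := H.verts
  Adj x y := H.Adj x y ∧ s(x, y) ≠ s(a, b)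
  adj_sub := fun h => ((insertEdge_adj hab).1 (H.adj_sub h.1)).resolve_right h.2
  edge_vert := fun h => H.edge_vert h.1
  symm := ⟨fun x y h => ⟨H.adj_symm h.1, by rw [Sym2.eq_swap]; exact h.2⟩⟩

lemma prunedSub_connected {G : SimpleGraph V} {a b : V} (hab : a ≠ b)
    {H : (insertEdge G a b).Subgraph} (hH : H.Connected) {c : V}
    (hac : H.Adj a c) (hbc : H.Adj b c) :
    (prunedSub G a b hab H).Connected := by
  have hca : c ≠ a := fun h => (H.adj_sub hac).ne (h ▸ rfl)
  have hcb : c ≠ b := fun h => (H.adj_sub hbc).ne (h ▸ rfl)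
  have hcv : c ∈ H.verts := H.edge_vert (H.adj_symm hac)
  have hadjac : (prunedSub G a b hab H).Adj a c := by
    refine ⟨hac, fun hEq => ?_⟩
    rw [Sym2.eq_iff] at hEq
    rcases hEq with ⟨-, h2⟩ | ⟨h1, -⟩
    · exact hcb h2
    · exact hab h1
  have hadjbc : (prunedSub G a b hab H).Adj b c := by
    refine ⟨hbc, fun hEq => ?_⟩
    rw [Sym2.eq_iff] at hEq
    rcases hEq with ⟨h1, -⟩ | ⟨-, h2⟩
    · exact hab h1.symm
    · exact hca h2
  have key : ∀ {u v : H.verts}, H.coe.Walk u v →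
      (prunedSub G a b hab H).coe.Reachable u v := by
    intro u v w
    induction w with
    | nil => exact Reachable.refl _
    | cons hxy p ih =>
      rename_i x y z
      refine Reachable.trans ?_ ih
      have hxy' : H.Adj ↑x ↑y := hxy
      by_cases hne : s((x : V), (y : V)) = s(a, b)
      · rw [Sym2.eq_iff] at hne
        have hc : c ∈ (prunedSub G a b hab H).verts := hcv
        rcases hne with ⟨hxa, hyb⟩ | ⟨hxb, hya⟩
        · have r1 : (prunedSub G a b hab H).coe.Adj x ⟨c, hc⟩ := by
            show (prunedSub G a b hab H).Adj ↑x c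
            rw [hxa]; exact hadjac
          have r2 : (prunedSub G a b hab H).coe.Adj ⟨c, hc⟩ y := by
            show (prunedSub G a b hab H).Adj c ↑y
            rw [hyb]; exact (prunedSub G a b hab H).adj_symm hadjbc
          exact (r1.reachable).trans r2.reachable
        · have r1 : (prunedSub G a b hab H).coe.Adj x ⟨c, hc⟩ := by
            show (prunedSub G a b hab H).Adj ↑x c
            rw [hxb]; exact hadjbc
          have r2 : (prunedSub G a b hab H).coe.Adj ⟨c, hc⟩ y := by
            show (prunedSub G a b hab H).Adj c ↑y
            rw [hya]; exact (prunedSub G a b hab H).adj_symm hadjac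
          exact (r1.reachable).trans r2.reachable
      · exact Adj.reachable (show (prunedSub G a b hab H).Adj ↑x ↑y from ⟨hxy', hne⟩)
  have hne : Nonempty ↥(prunedSub G a b hab H).verts := hH.coe.nonempty
  exact ⟨⟨fun u v => (hH.coe u v).elim fun w => key w⟩⟩

lemma prunedSub_adj' {G : SimpleGraph V} {a b : V} (hab : a ≠ b)
    {H : (insertEdge G a b).Subgraph} {c : V} (hac : H.Adj a c) (hbc : H.Adj b c) :
    (prunedSub G a b hab H).Adj a c := by
  have hcb : c ≠ b := fun h => (H.adj_sub hbc).ne (h ▸ rfl)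
  refine ⟨hac, fun hEq => ?_⟩
  rw [Sym2.eq_iff] at hEq
  rcases hEq with ⟨-, h2⟩ | ⟨h1, -⟩
  · exact hcb h2
  · exact hab h1

lemma prunedSub_count [Fintype V] {G : SimpleGraph V} {a b : V} (hab : a ≠ b)
    {H : (insertEdge G a b).Subgraph} {k : ℕ}
    (hcnt : ∀ x y, H.Adj x y → k - 2 ≤ {c : V | H.Adj x c ∧ H.Adj y c}.ncard)
    {x y : V} (hxy : (prunedSub G a b hab H).Adj x y) :
    k - 1 - 2 ≤ {z : V | (prunedSub G a b hab H).Adj x z ∧ (prunedSub G a b hab H).Adj y z}.ncard := by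
  classical
  obtain ⟨hxy', hne⟩ := hxy
  set S : Set V := {c : V | H.Adj x c ∧ H.Adj y c} with hSdef
  set S' : Set V := {z : V | (prunedSub G a b hab H).Adj x z ∧ (prunedSub G a b hab H).Adj y z}
    with hS'def
  have hS : k - 2 ≤ S.ncard := hcnt x y hxy'
  set w : V := if x = a ∨ y = a then b else a with hw
  have hsub : S \ {w} ⊆ S' := by
    rintro z ⟨⟨hxz, hyz⟩, hzw⟩
    have hzw' : z ≠ w := hzw
    have hxz' : s(x, z) ≠ s(a, b) := by
      intro hEq
      rw [Sym2.eq_iff] at hEq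
      rcases hEq with ⟨hxa, hzb⟩ | ⟨hxb, hza⟩
      · exact hzw' (by rw [hzb, hw, if_pos (Or.inl hxa)])
      · have hya : y ≠ a := by
          intro hya
          exact hne (by rw [hxb, hya, Sym2.eq_swap])
        have hxa : x ≠ a := by rw [hxb]; exact fun h => hab h.symm
        exact hzw' (by rw [hza, hw, if_neg (by tauto)])
    have hyz' : s(y, z) ≠ s(a, b) := by
      intro hEq
      rw [Sym2.eq_iff] at hEq
      rcases hEq with ⟨hya, hzb⟩ | ⟨hyb, hza⟩
      · exact hzw' (by rw [hzb, hw, if_pos (Or.inr hya)])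
      · have hxa : x ≠ a := by
          intro hxa
          exact hne (by rw [hxa, hyb])
        have hya : y ≠ a := by rw [hyb]; exact fun h => hab h.symm
        exact hzw' (by rw [hza, hw, if_neg (by tauto)])
    exact ⟨⟨hxz, hxz'⟩, ⟨hyz, hyz'⟩⟩
  have h1 : S.ncard ≤ (S \ {w}).ncard + 1 := by
    calc S.ncard ≤ ((S \ {w}) ∪ {w}).ncard :=
          Set.ncard_le_ncard (fun z hz => by
            by_cases hzw : z = w
            · exact Or.inr (by simp [hzw])
            · exact Or.inl ⟨hz, hzw⟩) (Set.toFinite _)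
      _ ≤ (S \ {w}).ncard + ({w} : Set V).ncard := Set.ncard_union_le _ _
      _ = (S \ {w}).ncard + 1 := by rw [Set.ncard_singleton]
  have h2 : (S \ {w}).ncard ≤ S'.ncard := Set.ncard_le_ncard hsub (Set.toFinite _)
  omega

lemma trussNumber_le_kmax [Fintype V] {G : SimpleGraph V} {a b : V} {e : Sym2 V}
    (he : e ∈ sideEdges G a b) : trussNumber G e ≤ kmax G a b :=
  le_csSup ((Set.toFinite (sideEdges G a b)).image _).bddAbove ⟨e, he, rfl⟩

theorem stmt15 [Fintype V] (G : SimpleGraph V) (a b : V) (hab : a ≠ b)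
    (hnadj : ¬ G.Adj a b) (hS : (commonNbrs G a b).Nonempty)
    (e' : Sym2 V) (he' : e' ∈ G.edgeSet)
    (h : kmax G a b < trussNumber G e') :
    trussNumber (insertEdge G a b) e' = trussNumber G e' := by
  have hle : G ≤ insertEdge G a b := le_sup_left
  have he'' : e' ∈ (insertEdge G a b).edgeSet := edgeSet_mono hle he'
  -- easy direction
  obtain ⟨H0, hH0, he0⟩ := exists_truss he'
  have hge : trussNumber G e' ≤ trussNumber (insertEdge G a b) e' :=
    le_trussNumber (restrictSub_isTruss H0 (fun x y hxy => hle (H0.adj_sub hxy)) hH0) he0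
  -- hard direction
  obtain ⟨H, hH, heH⟩ := exists_truss he''
  set k := trussNumber (insertEdge G a b) e' with hk
  by_cases hADJ : H.Adj a b
  · -- get a common neighbor c of a, b in H
    have hk2 : 2 ≤ kmax G a b := by
      obtain ⟨c0, hac0, hbc0⟩ := hS
      exact le_trans (two_le_trussNumber (G := G) (e := s(a, c0)) hac0)
        (trussNumber_le_kmax ⟨c0, hac0, hbc0, Or.inl rfl⟩)
    have hk3 : 3 ≤ k := by omega
    have h1 := hH.2.2 a b hADJ
    have hpos : 0 < ({c : V | H.Adj a c ∧ H.Adj b c}).ncard := by omega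
    obtain ⟨c, hac, hbc⟩ := (Set.ncard_pos (Set.toFinite _)).1 hpos
    have hcb : c ≠ b := fun hEq => (H.adj_sub hbc).ne (hEq ▸ rfl)
    -- the pruned subgraph is a (k-1)-truss of G containing s(a,c)
    have hadj' : (prunedSub G a b hab H).Adj a c := prunedSub_adj' hab hac hbc
    have htruss : IsTruss G (k - 1) (prunedSub G a b hab H) :=
      ⟨prunedSub_connected hab hH.1 hac hbc, ⟨s(a, c), hadj'⟩,
        fun x y hxy => prunedSub_count hab hH.2.2 hxy⟩
    have hmem : s(a, c) ∈ (prunedSub G a b hab H).edgeSet := hadj'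
    have h2 : k - 1 ≤ trussNumber G s(a, c) := le_trussNumber htruss hmem
    have hGac : G.Adj a c :=
      ((insertEdge_adj hab).1 (H.adj_sub hac)).resolve_right (by
        intro hEq
        rw [Sym2.eq_iff] at hEq
        rcases hEq with ⟨-, h2'⟩ | ⟨h1', -⟩
        · exact hcb h2'
        · exact hab h1')
    have hGbc : G.Adj b c :=
      ((insertEdge_adj hab).1 (H.adj_sub hbc)).resolve_right (by
        intro hEq
        rw [Sym2.eq_iff] at hEq
        rcases hEq with ⟨h1', -⟩ | ⟨-, h2'⟩
        · exact hab h1'.symm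
        · exact (H.adj_sub hac).ne (h2' ▸ rfl))
    have h3 : trussNumber G s(a, c) ≤ kmax G a b :=
      trussNumber_le_kmax ⟨c, hGac, hGbc, Or.inl rfl⟩
    omega
  · -- all edges of H lie in G
    have hG : ∀ ⦃x y⦄, H.Adj x y → G.Adj x y := by
      intro x y hxy
      refine ((insertEdge_adj hab).1 (H.adj_sub hxy)).resolve_right ?_
      intro hEq
      rw [Sym2.eq_iff] at hEq
      rcases hEq with ⟨h1', h2'⟩ | ⟨h1', h2'⟩
      · exact hADJ (h1' ▸ h2' ▸ hxy)
      · exact hADJ (h1' ▸ h2' ▸ H.adj_symm hxy)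
    have := le_trussNumber (restrictSub_isTruss H hG hH) heH
    omega
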